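/- Let ρ and ρ' be complex matrices indexed by (Fin m × Fin n) × (Fin m × Fin n). If trace((A ⊗ₖ B) · ρ) = trace((A ⊗ₖ B) · ρ') for every m×m complex matrix A with 0 ≤ A ≤ 1ₘ and every n×n complex matrix B with 0 ≤ B ≤ 1ₙ (Loewner order), then ρ = ρ'. That is, complex quantum theory satisfies Local Tomography: product effects are tomographically complete for bipartite states. -/

import Mathlib

open Matrix
open scoped Kronecker ComplexOrder


-- helper: projection from unit vector
lemma herm_vmv {k : ℕ} (u : Fin k → ℂ) :
    (vecMulVec u (star u))ᴴ = vecMulVec u (star u) := by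
  ext i j
  simp [conjTranspose_apply, vecMulVec_apply, mul_comm]

lemma idem_vmv {k : ℕ} (u : Fin k → ℂ) (hu : ∑ i, (starRingEnd ℂ) (u i) * u i = 1) :
    vecMulVec u (star u) * vecMulVec u (star u) = vecMulVec u (star u) := by
  ext i j
  simp only [mul_apply, vecMulVec_apply, Pi.star_apply, RCLike.star_def]
  calc ∑ x, u i * (starRingEnd ℂ) (u x) * (u x * (starRingEnd ℂ) (u j))
      = (u i * (starRingEnd ℂ) (u j)) * ∑ x, (starRingEnd ℂ) (u x) * u x := by
        rw [Finset.mul_sum]; apply Finset.sum_congr rfl; intros; ring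
    _ = u i * (starRingEnd ℂ) (u j) := by rw [hu, mul_one]

lemma psd_vmv {k : ℕ} (u : Fin k → ℂ) (hu : ∑ i, (starRingEnd ℂ) (u i) * u i = 1) :
    (vecMulVec u (star u)).PosSemidef := by
  have := posSemidef_conjTranspose_mul_self (vecMulVec u (star u))
  rwa [herm_vmv, idem_vmv u hu] at this

lemma psd_one_sub_vmv {k : ℕ} (u : Fin k → ℂ) (hu : ∑ i, (starRingEnd ℂ) (u i) * u i = 1) :
    ((1 : Matrix (Fin k) (Fin k) ℂ) - vecMulVec u (star u)).PosSemidef := by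
  have := posSemidef_conjTranspose_mul_self ((1 : Matrix (Fin k) (Fin k) ℂ) - vecMulVec u (star u))
  have h1 : ((1 : Matrix (Fin k) (Fin k) ℂ) - vecMulVec u (star u))ᴴ
      = 1 - vecMulVec u (star u) := by
    rw [conjTranspose_sub, conjTranspose_one, herm_vmv]
  have h2 : ((1 : Matrix (Fin k) (Fin k) ℂ) - vecMulVec u (star u)) *
      ((1 : Matrix (Fin k) (Fin k) ℂ) - vecMulVec u (star u)) = 1 - vecMulVec u (star u) := by
    simp only [mul_sub, sub_mul, mul_one, one_mul, idem_vmv u hu]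
    abel
  rwa [h1, h2] at this

lemma vmv_add_left {k : ℕ} (x y z : Fin k → ℂ) :
    vecMulVec (x + y) z = vecMulVec x z + vecMulVec y z := by
  ext i j; simp [vecMulVec_apply, add_mul]

lemma vmv_add_right {k : ℕ} (x y z : Fin k → ℂ) :
    vecMulVec x (y + z) = vecMulVec x y + vecMulVec x z := by
  ext i j; simp [vecMulVec_apply, mul_add]

lemma vmv_smul_left {k : ℕ} (c : ℂ) (x z : Fin k → ℂ) :
    vecMulVec (c • x) z = c • vecMulVec x z := by
  ext i j; simp [vecMulVec_apply]; ring

lemma vmv_smul_right {k : ℕ} (c : ℂ) (x z : Fin k → ℂ) :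
    vecMulVec x (c • z) = c • vecMulVec x z := by
  ext i j; simp [vecMulVec_apply]; ring

lemma star_add' {k : ℕ} (x y : Fin k → ℂ) : star (x + y) = star x + star y := star_add x y

lemma polar {k : ℕ} (G : Matrix (Fin k) (Fin k) ℂ →ₗ[ℂ] ℂ)
    (h : ∀ v : Fin k → ℂ, G (vecMulVec v (star v)) = 0) (M : Matrix (Fin k) (Fin k) ℂ) :
    G M = 0 := by
  have key : ∀ x y : Fin k → ℂ, G (vecMulVec x (star y)) = 0 := by
    intro x y
    have e1 := h (x + y)
    have e2 := h (x + Complex.I • y)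
    rw [star_add, vmv_add_left, vmv_add_right, vmv_add_right, map_add, map_add, map_add,
      h x, h y] at e1
    have hsI : star (Complex.I • y) = (-Complex.I) • star y := by
      ext i; simp [Pi.smul_apply, Complex.conj_I]
    rw [star_add, hsI, vmv_add_left, vmv_add_right, vmv_add_right, vmv_smul_left,
      vmv_smul_right, vmv_smul_right, vmv_smul_left] at e2
    simp only [map_add, LinearMap.map_smul, h x, h y, smul_eq_mul, mul_zero] at e2
    -- e1 : 0 + G(x y*) + (G(y x*) + 0) = 0 ; e2 : -I G(x y*) + I G(y x*) = 0
    set a := G (vecMulVec x (star y))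
    set b := G (vecMulVec y (star x))
    have hab : a + b = 0 := by linear_combination e1
    have hab2 : -(Complex.I * a) + Complex.I * b = 0 := by linear_combination e2
    have h3 : 2 * Complex.I * a = 0 := by linear_combination Complex.I * hab - hab2
    simpa [Complex.I_ne_zero, mul_eq_zero] using h3
  have hstd : ∀ (a b : Fin k) (c : ℂ), Matrix.single a b c
      = c • vecMulVec (Pi.single a 1) (star (Pi.single b (1:ℂ))) := by
    intro a b c
    ext i j
    simp [Matrix.single, vecMulVec_apply, Pi.single_apply, eq_comm]
    aesop
  rw [matrix_eq_sum_single M, map_sum]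
  apply Finset.sum_eq_zero
  intro a _
  rw [map_sum]
  apply Finset.sum_eq_zero
  intro b _
  rw [hstd]
  rw [map_smul, key, smul_zero]

lemma vmv_scale {k : ℕ} (v : Fin k → ℂ) (hv : v ≠ 0) :
    ∃ (r : ℝ) (u : Fin k → ℂ), (∑ i, (starRingEnd ℂ) (u i) * u i = 1) ∧
      vecMulVec v (star v) = (r : ℂ) • vecMulVec u (star u) := by
  have hvr : 0 < ∑ i, Complex.normSq (v i) := by
    obtain ⟨i, hi⟩ := Function.ne_iff.mp hv
    exact Finset.sum_pos' (fun j _ => Complex.normSq_nonneg _)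
      ⟨i, Finset.mem_univ i, Complex.normSq_pos.mpr hi⟩
  set r : ℝ := ∑ i, Complex.normSq (v i) with hrdef
  set t : ℝ := Real.sqrt r with htdef
  have ht : (0:ℝ) < t := Real.sqrt_pos.mpr hvr
  have htr : (t:ℂ) * (t:ℂ) = (r:ℂ) := by
    rw [← Complex.ofReal_mul, Real.mul_self_sqrt hvr.le]
  have htne : (t:ℂ) ≠ 0 := by exact_mod_cast ht.ne'
  refine ⟨r, ((t:ℂ))⁻¹ • v, ?_, ?_⟩
  · have : ∑ i, (starRingEnd ℂ) ((((t:ℂ))⁻¹ • v) i) * ((((t:ℂ))⁻¹ • v) i)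
        = (t:ℂ)⁻¹ * (t:ℂ)⁻¹ * ∑ i, (starRingEnd ℂ) (v i) * (v i) := by
      rw [Finset.mul_sum]
      refine Finset.sum_congr rfl fun i _ => ?_
      simp [map_inv₀, Complex.conj_ofReal]
      ring
    rw [this]
    have hsum : ∑ i, (starRingEnd ℂ) (v i) * (v i) = (r:ℂ) := by
      rw [hrdef]
      push_cast
      refine Finset.sum_congr rfl fun i _ => ?_
      rw [Complex.normSq_eq_conj_mul_self]
    rw [hsum, ← htr]
    field_simp
  · ext i j
    simp only [vecMulVec_apply, Pi.star_apply, Pi.smul_apply, Matrix.smul_apply, smul_eq_mul,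
      RCLike.star_def, _root_.map_mul, map_inv₀, Complex.conj_ofReal]
    field_simp
    linear_combination v i * (starRingEnd ℂ) (v j) * htr

theorem stmt13 {m n : ℕ} (ρ ρ' : Matrix (Fin m × Fin n) (Fin m × Fin n) ℂ)
    (h : ∀ (A : Matrix (Fin m) (Fin m) ℂ) (B : Matrix (Fin n) (Fin n) ℂ),
      A.PosSemidef → ((1 : Matrix (Fin m) (Fin m) ℂ) - A).PosSemidef →
      B.PosSemidef → ((1 : Matrix (Fin n) (Fin n) ℂ) - B).PosSemidef →
      ((A ⊗ₖ B) * ρ).trace = ((A ⊗ₖ B) * ρ').trace) :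
    ρ = ρ' := by
  set σ : Matrix (Fin m × Fin n) (Fin m × Fin n) ℂ := ρ - ρ' with hσ
  have h0 : ∀ (A : Matrix (Fin m) (Fin m) ℂ) (B : Matrix (Fin n) (Fin n) ℂ),
      A.PosSemidef → ((1 : Matrix (Fin m) (Fin m) ℂ) - A).PosSemidef →
      B.PosSemidef → ((1 : Matrix (Fin n) (Fin n) ℂ) - B).PosSemidef →
      ((A ⊗ₖ B) * σ).trace = 0 := by
    intro A B h1 h2 h3 h4
    rw [hσ, Matrix.mul_sub, trace_sub, h A B h1 h2 h3 h4, sub_self]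
  have hvw : ∀ (v : Fin m → ℂ) (w : Fin n → ℂ),
      ((vecMulVec v (star v) ⊗ₖ vecMulVec w (star w)) * σ).trace = 0 := by
    intro v w
    by_cases hv : v = 0
    · have : vecMulVec v (star v) = 0 := by subst hv; ext i j; simp [vecMulVec_apply]
      rw [this, zero_kronecker, Matrix.zero_mul, trace_zero]
    by_cases hw : w = 0
    · have : vecMulVec w (star w) = 0 := by subst hw; ext i j; simp [vecMulVec_apply]
      rw [this, kronecker_zero, Matrix.zero_mul, trace_zero]
    obtain ⟨r, u, hu1, hu2⟩ := vmv_scale v hv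
    obtain ⟨s, p, hp1, hp2⟩ := vmv_scale w hw
    rw [hu2, hp2, smul_kronecker, kronecker_smul, Matrix.smul_mul, Matrix.smul_mul,
      trace_smul, trace_smul,
      h0 _ _ (psd_vmv u hu1) (psd_one_sub_vmv u hu1) (psd_vmv p hp1) (psd_one_sub_vmv p hp1)]
    simp
  have step1 : ∀ (A : Matrix (Fin m) (Fin m) ℂ) (w : Fin n → ℂ),
      ((A ⊗ₖ vecMulVec w (star w)) * σ).trace = 0 := by
    intro A w
    let G : Matrix (Fin m) (Fin m) ℂ →ₗ[ℂ] ℂ :=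
      { toFun := fun X => ((X ⊗ₖ vecMulVec w (star w)) * σ).trace
        map_add' := fun X Y => by
          rw [Matrix.add_kronecker, Matrix.add_mul, trace_add]
        map_smul' := fun c X => by
          rw [Matrix.smul_kronecker, Matrix.smul_mul, trace_smul]; rfl }
    exact polar G (fun v => hvw v w) A
  have step2 : ∀ (A : Matrix (Fin m) (Fin m) ℂ) (B : Matrix (Fin n) (Fin n) ℂ),
      ((A ⊗ₖ B) * σ).trace = 0 := by
    intro A B
    let G : Matrix (Fin n) (Fin n) ℂ →ₗ[ℂ] ℂ :=
      { toFun := fun Y => ((A ⊗ₖ Y) * σ).trace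
        map_add' := fun X Y => by
          rw [Matrix.kronecker_add, Matrix.add_mul, trace_add]
        map_smul' := fun c X => by
          rw [Matrix.kronecker_smul, Matrix.smul_mul, trace_smul]; rfl }
    exact polar G (fun w => step1 A w) B
  have hent : ∀ pq qr : Fin m × Fin n, σ pq qr = 0 := by
    intro pq qr
    have := step2 (Matrix.single qr.1 pq.1 1) (Matrix.single qr.2 pq.2 1)
    rw [Matrix.trace] at this
    simpa [Matrix.diag, Matrix.mul_apply, kroneckerMap_apply, Matrix.single,
      Fintype.sum_prod_type, ite_and, Finset.sum_ite_eq, Finset.sum_ite_eq'] using this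
  ext pq qr
  have := hent pq qr
  rw [hσ, Matrix.sub_apply, sub_eq_zero] at this
  exact this
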